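/- With the notation of the context, suppose in addition that F⁺(x,y) ≤ M for all (x,y) for some M > 0. Then the form 𝓔^Y(u,u) := 𝓔^{μ,F}(u,u) + ∫_{ℝ^d} u² dρ⁺, where 𝓔^{μ,F}(u,u) := 𝓔(u,u) − ∬_{ℝ^d×ℝ^d} u(x)u(y)(e^{F(x,y)}−1)n(x,y) dy dx − ∫u²dμ⁺ + ∫u²dμ⁻, satisfies the two-sided comparison 𝓔⁻(u,u) ≤ 𝓔^Y(u,u) ≤ e^M · 𝓔⁻(u,u). -/

import Mathlib

noncomputable section

open MeasureTheory Real ENNReal Set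
open scoped Classical

/-- The state space `ℝ^d` with the Euclidean norm and Lebesgue measure. -/
abbrev V (d : ℕ) := EuclideanSpace ℝ (Fin d)

/-- `I(r) = ∫₀^∞ s^{(d+α)/2-1} e^{-s/4 - r²/s} ds`. -/
def Ifun (d : ℕ) (α r : ℝ) : ℝ :=
  ∫ s in Set.Ioi (0 : ℝ), s ^ (((d : ℝ) + α) / 2 - 1) * Real.exp (-s / 4 - r ^ 2 / s)

/-- `ψ(r) = I(r)/I(0)`. -/
def psi (d : ℕ) (α r : ℝ) : ℝ := Ifun d α r / Ifun d α 0

/-- The constant `C(d,-α) = α Γ((d+α)/2) / (2^{1-α} π^{d/2} Γ(1-α/2))`. -/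
def Cconst (d : ℕ) (α : ℝ) : ℝ :=
  α * Real.Gamma (((d : ℝ) + α) / 2) /
    (2 ^ (1 - α) * Real.pi ^ ((d : ℝ) / 2) * Real.Gamma (1 - α / 2))

/-- Jump kernel density `n(x,y) = 2C(d,-α) ψ(m^{1/α}|x-y|) |x-y|^{-(d+α)}` for `x ≠ y`,
with `n(x,x) = 0`. -/
def nker (d : ℕ) (α m : ℝ) (x y : V d) : ℝ :=
  if x = y then 0
  else 2 * Cconst d α * psi d α (m ^ (1 / α) * ‖x - y‖) / ‖x - y‖ ^ ((d : ℝ) + α)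

/-- `F⁺ = F ∨ 0`. -/
def Fp (d : ℕ) (F : V d → V d → ℝ) (x y : V d) : ℝ := max (F x y) 0

/-- `F⁻ = -(F ∧ 0)`. -/
def Fm (d : ℕ) (F : V d → V d → ℝ) (x y : V d) : ℝ := -(min (F x y) 0)

/-- `G⁺ = (e^{F⁺} - 1) e^{-F⁻}`. -/
def Gp (d : ℕ) (F : V d → V d → ℝ) (x y : V d) : ℝ :=
  (Real.exp (Fp d F x y) - 1) * Real.exp (-(Fm d F x y))

/-- `G⁻ = 1 - e^{-F⁻}`. -/
def Gm (d : ℕ) (F : V d → V d → ℝ) (x y : V d) : ℝ := 1 - Real.exp (-(Fm d F x y))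

/-- The Dirichlet form `𝓔(u,u) = (1/2)∬ (u(x)-u(y))² n(x,y) dx dy` (in `[0,∞]`). -/
def En (d : ℕ) (α m : ℝ) (u : V d → ℝ) : ℝ≥0∞ :=
  (1 / 2) * ∫⁻ x, ∫⁻ y, ENNReal.ofReal ((u x - u y) ^ 2 * nker d α m x y)

/-- The jump-type energy `∬ (u(x)-u(y))² G(x,y) n(x,y) dx dy` (in `[0,∞]`). -/
def Jform (d : ℕ) (α m : ℝ) (G : V d → V d → ℝ) (u : V d → ℝ) : ℝ≥0∞ :=
  ∫⁻ x, ∫⁻ y, ENNReal.ofReal ((u x - u y) ^ 2 * G x y * nker d α m x y)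

/-- `NG(x) = ∫ G(x,y) n(x,y) dy` (in `[0,∞]`). -/
def NG (d : ℕ) (α m : ℝ) (G : V d → V d → ℝ) (x : V d) : ℝ≥0∞ :=
  ∫⁻ y, ENNReal.ofReal (G x y * nker d α m x y)

/-- `ρ = μ + ξ_G` where `ξ_G(dx) = NG(x) dx`. -/
def rho (d : ℕ) (α m : ℝ) (G : V d → V d → ℝ) (μ : Measure (V d)) : Measure (V d) :=
  μ + volume.withDensity (NG d α m G)

/-- `∫ u² dμ` (in `[0,∞]`). -/
def sqInt (d : ℕ) (u : V d → ℝ) (μ : Measure (V d)) : ℝ≥0∞ :=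
  ∫⁻ x, ENNReal.ofReal ((u x) ^ 2) ∂μ

/-- The cross term `∬ u(x)u(y)(e^{F(x,y)}-1) n(x,y) dy dx` (Lebesgue–Bochner integral on the
product space). -/
def crossInt (d : ℕ) (α m : ℝ) (F : V d → V d → ℝ) (u : V d → ℝ) : ℝ :=
  ∫ p : V d × V d, u p.1 * u p.2 * (Real.exp (F p.1 p.2) - 1) * nker d α m p.1 p.2

/-- The quadratic form
`𝓔^{μ,F}(u,u) = 𝓔(u,u) - ∬ u(x)u(y)(e^{F(x,y)}-1)n(x,y) dy dx - ∫ u² dμ⁺ + ∫ u² dμ⁻`. -/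
def EmuF (d : ℕ) (α m : ℝ) (F : V d → V d → ℝ) (μp μm : Measure (V d)) (u : V d → ℝ) : ℝ :=
  (En d α m u).toReal - crossInt d α m F u - (sqInt d u μp).toReal + (sqInt d u μm).toReal

/-- The killed form
`𝓔⁻(u,u) = (1/2)∬ (u(x)-u(y))² e^{-F⁻(x,y)} n(x,y) dx dy + ∫ u² dρ⁻` (in `[0,∞]`). -/
def EnMinus (d : ℕ) (α m : ℝ) (F : V d → V d → ℝ) (μm : Measure (V d)) (u : V d → ℝ) : ℝ≥0∞ :=
  (1 / 2) * (∫⁻ x, ∫⁻ y, ENNReal.ofReal ((u x - u y) ^ 2 * Real.exp (-(Fm d F x y)) * nker d α m x y))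
    + sqInt d u (rho d α m (Gm d F) μm)

lemma Ifun_meas (d : ℕ) (α : ℝ) : Measurable (Ifun d α) := by
  have h : StronglyMeasurable fun p : ℝ × ℝ =>
      p.2 ^ (((d : ℝ) + α) / 2 - 1) * Real.exp (-p.2 / 4 - p.1 ^ 2 / p.2) := by
    apply Measurable.stronglyMeasurable; fun_prop
  exact (h.integral_prod_right' (ν := volume.restrict (Set.Ioi 0))).measurable

lemma Ifun_nonneg (d : ℕ) (α : ℝ) (r : ℝ) : 0 ≤ Ifun d α r := by
  apply setIntegral_nonneg measurableSet_Ioi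
  intro s hs
  exact mul_nonneg (Real.rpow_nonneg (le_of_lt hs) _) (Real.exp_nonneg _)

lemma Cconst_nonneg (d : ℕ) (α : ℝ) (hα0 : 0 < α) (hα2 : α < 2) : 0 ≤ Cconst d α := by
  apply div_nonneg
  · exact mul_nonneg hα0.le (Real.Gamma_pos_of_pos (by positivity)).le
  · have h1 : (0:ℝ) < 2 ^ (1 - α) := Real.rpow_pos_of_pos two_pos _
    have h2 : (0:ℝ) < Real.pi ^ ((d : ℝ) / 2) := Real.rpow_pos_of_pos Real.pi_pos _
    have h3 : 0 < Real.Gamma (1 - α / 2) := Real.Gamma_pos_of_pos (by linarith)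
    positivity

lemma nker_nonneg (d : ℕ) (α m : ℝ) (hα0 : 0 < α) (hα2 : α < 2) (x y : V d) :
    0 ≤ nker d α m x y := by
  unfold nker psi
  split
  · exact le_refl 0
  · apply div_nonneg
    · exact mul_nonneg (mul_nonneg two_pos.le (Cconst_nonneg d α hα0 hα2))
        (div_nonneg (Ifun_nonneg d α _) (Ifun_nonneg d α 0))
    · exact Real.rpow_nonneg (norm_nonneg _) _

lemma nker_symm (d : ℕ) (α m : ℝ) (x y : V d) : nker d α m x y = nker d α m y x := by
  unfold nker
  rw [norm_sub_rev]
  simp [eq_comm]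

lemma nker_meas (d : ℕ) (α m : ℝ) : Measurable fun p : V d × V d => nker d α m p.1 p.2 := by
  unfold nker psi
  have hI := Ifun_meas d α
  refine Measurable.ite ((isClosed_eq continuous_fst continuous_snd).measurableSet)
    measurable_const ?_
  have hnorm : Measurable fun p : V d × V d => ‖p.1 - p.2‖ :=
    ((continuous_fst.sub continuous_snd).norm).measurable
  fun_prop

lemma NG_meas (d : ℕ) (α m : ℝ) (G : V d → V d → ℝ)
    (hGm : Measurable fun p : V d × V d => G p.1 p.2) : Measurable (NG d α m G) := by
  unfold NG
  exact Measurable.lintegral_prod_right'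
    (f := fun p : V d × V d => ENNReal.ofReal (G p.1 p.2 * nker d α m p.1 p.2))
    ((hGm.mul (nker_meas d α m)).ennreal_ofReal)

lemma integrable_of_lint {X : Type*} [MeasurableSpace X] {μ : Measure X} {g : X → ℝ}
    (hg : Measurable g) (h0 : ∀ p, 0 ≤ g p) (hfin : ∫⁻ p, ENNReal.ofReal (g p) ∂μ ≠ ⊤) :
    Integrable g μ := by
  refine ⟨hg.aestronglyMeasurable, ?_⟩
  rw [hasFiniteIntegral_iff_norm]
  have : ∀ p, ENNReal.ofReal ‖g p‖ = ENNReal.ofReal (g p) := by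
    intro p; rw [Real.norm_of_nonneg (h0 p)]
  simp_rw [this]
  exact hfin.lt_top

lemma lintegral_split (d : ℕ) (α m : ℝ) (hα0 : 0 < α) (hα2 : α < 2)
    (G : V d → V d → ℝ) (hGmeas : Measurable fun p : V d × V d => G p.1 p.2)
    (hG0 : ∀ x y, 0 ≤ G x y) (hGsym : ∀ x y, G x y = G y x)
    (u : V d → ℝ) (hu : Measurable u) :
    ∫⁻ p : V d × V d, ENNReal.ofReal
        (((u p.1)^2 + (u p.2)^2) * G p.1 p.2 * nker d α m p.1 p.2)
        ∂((volume : Measure (V d)).prod volume)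
      = (∫⁻ x, ENNReal.ofReal ((u x)^2) * NG d α m G x)
        + ∫⁻ x, ENNReal.ofReal ((u x)^2) * NG d α m G x := by
  have hnm := nker_meas d α m
  have hnn := nker_nonneg d α m hα0 hα2
  have hGn : Measurable fun p : V d × V d => ENNReal.ofReal (G p.1 p.2 * nker d α m p.1 p.2) :=
    (hGmeas.mul hnm).ennreal_ofReal
  have hsplit : ∀ p : V d × V d,
      ENNReal.ofReal (((u p.1)^2 + (u p.2)^2) * G p.1 p.2 * nker d α m p.1 p.2)
        = ENNReal.ofReal ((u p.1)^2 * (G p.1 p.2 * nker d α m p.1 p.2))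
          + ENNReal.ofReal ((u p.2)^2 * (G p.1 p.2 * nker d α m p.1 p.2)) := by
    intro p
    rw [← ENNReal.ofReal_add (mul_nonneg (sq_nonneg _) (mul_nonneg (hG0 _ _) (hnn _ _)))
        (mul_nonneg (sq_nonneg _) (mul_nonneg (hG0 _ _) (hnn _ _)))]
    congr 1; ring
  simp_rw [hsplit]
  rw [lintegral_add_left (by fun_prop :
    Measurable fun p : V d × V d =>
      ENNReal.ofReal (u p.1 ^ 2 * (G p.1 p.2 * nker d α m p.1 p.2)))]
  have key1 : ∫⁻ p : V d × V d, ENNReal.ofReal ((u p.1)^2 * (G p.1 p.2 * nker d α m p.1 p.2))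
        ∂((volume : Measure (V d)).prod volume)
      = ∫⁻ x, ENNReal.ofReal ((u x)^2) * NG d α m G x := by
    rw [← lintegral_lintegral (f := fun x y => ENNReal.ofReal ((u x)^2 * (G x y * nker d α m x y)))
        (by fun_prop :
          Measurable fun p : V d × V d =>
            ENNReal.ofReal (u p.1 ^ 2 * (G p.1 p.2 * nker d α m p.1 p.2))).aemeasurable]
    refine lintegral_congr fun x => ?_
    simp_rw [ENNReal.ofReal_mul (sq_nonneg (u x))]
    have hGnx : Measurable fun y => ENNReal.ofReal (G x y * nker d α m x y) :=
      hGn.comp measurable_prodMk_left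
    rw [lintegral_const_mul _ hGnx]
    rfl
  have key2 : ∫⁻ p : V d × V d, ENNReal.ofReal ((u p.2)^2 * (G p.1 p.2 * nker d α m p.1 p.2))
        ∂((volume : Measure (V d)).prod volume)
      = ∫⁻ p : V d × V d, ENNReal.ofReal ((u p.1)^2 * (G p.1 p.2 * nker d α m p.1 p.2))
        ∂((volume : Measure (V d)).prod volume) := by
    rw [← lintegral_prod_swap
      (f := fun p : V d × V d => ENNReal.ofReal ((u p.1)^2 * (G p.1 p.2 * nker d α m p.1 p.2)))]
    refine lintegral_congr fun p => ?_
    simp only [Prod.fst_swap, Prod.snd_swap]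
    rw [hGsym p.2 p.1, nker_symm d α m p.2 p.1]
  rw [key1, key2, key1]

lemma sqInt_rho_eq (d : ℕ) (α m : ℝ) (G : V d → V d → ℝ)
    (hGmeas : Measurable fun p : V d × V d => G p.1 p.2)
    (μ : Measure (V d)) (u : V d → ℝ) (hu : Measurable u) :
    sqInt d u (rho d α m G μ) = sqInt d u μ + ∫⁻ x, ENNReal.ofReal ((u x)^2) * NG d α m G x := by
  unfold sqInt rho
  rw [lintegral_add_measure]
  congr 1
  rw [lintegral_withDensity_eq_lintegral_mul volume (NG_meas d α m G hGmeas)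
    ((hu.pow_const 2).ennreal_ofReal)]
  refine lintegral_congr fun x => ?_
  simp [mul_comm]

/-- If moreover `F⁺ ≤ M₀` for some `M₀ > 0`, then
`𝓔⁻(u,u) ≤ 𝓔^Y(u,u) ≤ e^{M₀} 𝓔⁻(u,u)`, where
`𝓔^Y(u,u) = 𝓔^{μ,F}(u,u) + ∫ u² dρ⁺`. -/
theorem EY_comparison
    (d : ℕ) (hd : 1 ≤ d) (α m : ℝ) (hα0 : 0 < α) (hα2 : α < 2) (hm : 0 ≤ m)
    (F : V d → V d → ℝ) (hFmeas : Measurable (Function.uncurry F))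
    (hFbound : ∃ M : ℝ, ∀ x y, |F x y| ≤ M)
    (hFsymm : ∀ x y, F x y = F y x) (hFdiag : ∀ x, F x x = 0)
    (μp μm : Measure (V d))
    (u : V d → ℝ) (hu : Measurable u)
    (hE : En d α m u ≠ ⊤)
    (hμp : sqInt d u μp ≠ ⊤) (hμm : sqInt d u μm ≠ ⊤)
    (hNGp : ∫⁻ x, ENNReal.ofReal ((u x) ^ 2) * NG d α m (Gp d F) x ≠ ⊤)
    (hNGm : ∫⁻ x, ENNReal.ofReal ((u x) ^ 2) * NG d α m (Gm d F) x ≠ ⊤)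
    (M₀ : ℝ) (hM₀ : 0 < M₀) (hFpB : ∀ x y, Fp d F x y ≤ M₀) :
    (EnMinus d α m F μm u).toReal
      ≤ EmuF d α m F μp μm u + (sqInt d u (rho d α m (Gp d F) μp)).toReal ∧
    EmuF d α m F μp μm u + (sqInt d u (rho d α m (Gp d F) μp)).toReal
      ≤ Real.exp M₀ * (EnMinus d α m F μm u).toReal := by
  -- ℝ≥0∞-valued quantities
  set A := ∫⁻ p : V d × V d, ENNReal.ofReal ((u p.1 - u p.2) ^ 2 * nker d α m p.1 p.2)
    ∂((volume : Measure (V d)).prod volume) with hAdef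
  set B := ∫⁻ p : V d × V d, ENNReal.ofReal
    ((u p.1 - u p.2) ^ 2 * Real.exp (-(Fm d F p.1 p.2)) * nker d α m p.1 p.2)
    ∂((volume : Measure (V d)).prod volume) with hBdef
  set C := ∫⁻ p : V d × V d, ENNReal.ofReal
    ((u p.1 - u p.2) ^ 2 * Real.exp (F p.1 p.2) * nker d α m p.1 p.2)
    ∂((volume : Measure (V d)).prod volume) with hCdef
  set Pp := ∫⁻ x, ENNReal.ofReal ((u x) ^ 2) * NG d α m (Gp d F) x with hPpdef
  set Pm := ∫⁻ x, ENNReal.ofReal ((u x) ^ 2) * NG d α m (Gm d F) x with hPmdef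
  -- real-valued integrals
  set I1 := ∫ p : V d × V d, (u p.1 - u p.2) ^ 2 * nker d α m p.1 p.2
    ∂((volume : Measure (V d)).prod volume) with hI1def
  set Ib := ∫ p : V d × V d,
    (u p.1 - u p.2) ^ 2 * Real.exp (-(Fm d F p.1 p.2)) * nker d α m p.1 p.2
    ∂((volume : Measure (V d)).prod volume) with hIbdef
  set I2 := ∫ p : V d × V d,
    u p.1 * u p.2 * (Real.exp (F p.1 p.2) - 1) * nker d α m p.1 p.2
    ∂((volume : Measure (V d)).prod volume) with hI2def
  set I3 := ∫ p : V d × V d,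
    ((u p.1) ^ 2 + (u p.2) ^ 2) * Gp d F p.1 p.2 * nker d α m p.1 p.2
    ∂((volume : Measure (V d)).prod volume) with hI3def
  set I4 := ∫ p : V d × V d,
    (u p.1 - u p.2) ^ 2 * Real.exp (F p.1 p.2) * nker d α m p.1 p.2
    ∂((volume : Measure (V d)).prod volume) with hI4def
  set I5 := ∫ p : V d × V d,
    ((u p.1) ^ 2 + (u p.2) ^ 2) * Gm d F p.1 p.2 * nker d α m p.1 p.2
    ∂((volume : Measure (V d)).prod volume) with hI5def
  -- basic facts
  have hnn := nker_nonneg d α m hα0 hα2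
  have hnm := nker_meas d α m
  have hF : Measurable fun p : V d × V d => F p.1 p.2 := hFmeas
  have hFmm : Measurable fun p : V d × V d => Fm d F p.1 p.2 := by unfold Fm; fun_prop
  have hFpmeas : Measurable fun p : V d × V d => Fp d F p.1 p.2 := by unfold Fp; fun_prop
  have hGpm : Measurable fun p : V d × V d => Gp d F p.1 p.2 := by unfold Gp Fp Fm; fun_prop
  have hGmm : Measurable fun p : V d × V d => Gm d F p.1 p.2 := by unfold Gm Fm; fun_prop
  have hFp0 : ∀ x y : V d, 0 ≤ Fp d F x y := fun x y => le_max_right _ _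
  have hFm0 : ∀ x y : V d, 0 ≤ Fm d F x y := fun x y => neg_nonneg.mpr (min_le_right _ _)
  have hexpFm_le_one : ∀ x y : V d, Real.exp (-(Fm d F x y)) ≤ 1 := fun x y => by
    rw [← Real.exp_zero]; exact Real.exp_le_exp.mpr (neg_nonpos.mpr (hFm0 x y))
  have hGp0 : ∀ x y : V d, 0 ≤ Gp d F x y := fun x y => by
    have h1 : (1:ℝ) ≤ Real.exp (Fp d F x y) := by
      rw [← Real.exp_zero]; exact Real.exp_le_exp.mpr (hFp0 x y)
    exact mul_nonneg (by linarith) (Real.exp_nonneg _)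
  have hGm0 : ∀ x y : V d, 0 ≤ Gm d F x y := fun x y =>
    sub_nonneg.mpr (hexpFm_le_one x y)
  have hFsplit : ∀ x y : V d, F x y = Fp d F x y - Fm d F x y := by
    intro x y
    have h := max_add_min (F x y) 0
    unfold Fp Fm
    linarith
  have hexpF : ∀ x y : V d, Real.exp (F x y) = 1 + Gp d F x y - Gm d F x y := by
    intro x y
    rw [hFsplit x y, sub_eq_add_neg, Real.exp_add]
    unfold Gp Gm
    ring
  have hGpsym : ∀ x y : V d, Gp d F x y = Gp d F y x := by
    intro x y; unfold Gp Fp Fm; rw [hFsymm x y]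
  have hGmsym : ∀ x y : V d, Gm d F x y = Gm d F y x := by
    intro x y; unfold Gm Fm; rw [hFsymm x y]
  -- measurability of integrands
  have hm1 : Measurable fun p : V d × V d =>
      (u p.1 - u p.2) ^ 2 * nker d α m p.1 p.2 := by fun_prop
  have hmb : Measurable fun p : V d × V d =>
      (u p.1 - u p.2) ^ 2 * Real.exp (-(Fm d F p.1 p.2)) * nker d α m p.1 p.2 := by fun_prop
  have hm2 : Measurable fun p : V d × V d =>
      u p.1 * u p.2 * (Real.exp (F p.1 p.2) - 1) * nker d α m p.1 p.2 := by fun_prop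
  have hm3 : Measurable fun p : V d × V d =>
      ((u p.1) ^ 2 + (u p.2) ^ 2) * Gp d F p.1 p.2 * nker d α m p.1 p.2 := by fun_prop
  have hm5 : Measurable fun p : V d × V d =>
      ((u p.1) ^ 2 + (u p.2) ^ 2) * Gm d F p.1 p.2 * nker d α m p.1 p.2 := by fun_prop
  have hm4 : Measurable fun p : V d × V d =>
      (u p.1 - u p.2) ^ 2 * Real.exp (F p.1 p.2) * nker d α m p.1 p.2 := by fun_prop
  -- nonnegativity of integrands
  have h1nn : ∀ p : V d × V d, 0 ≤ (u p.1 - u p.2) ^ 2 * nker d α m p.1 p.2 :=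
    fun p => mul_nonneg (sq_nonneg _) (hnn _ _)
  have hbnn : ∀ p : V d × V d,
      0 ≤ (u p.1 - u p.2) ^ 2 * Real.exp (-(Fm d F p.1 p.2)) * nker d α m p.1 p.2 :=
    fun p => mul_nonneg (mul_nonneg (sq_nonneg _) (Real.exp_nonneg _)) (hnn _ _)
  have h3nn : ∀ p : V d × V d,
      0 ≤ ((u p.1) ^ 2 + (u p.2) ^ 2) * Gp d F p.1 p.2 * nker d α m p.1 p.2 :=
    fun p => mul_nonneg (mul_nonneg (by positivity) (hGp0 _ _)) (hnn _ _)
  have h5nn : ∀ p : V d × V d,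
      0 ≤ ((u p.1) ^ 2 + (u p.2) ^ 2) * Gm d F p.1 p.2 * nker d α m p.1 p.2 :=
    fun p => mul_nonneg (mul_nonneg (by positivity) (hGm0 _ _)) (hnn _ _)
  have h4nn : ∀ p : V d × V d,
      0 ≤ (u p.1 - u p.2) ^ 2 * Real.exp (F p.1 p.2) * nker d α m p.1 p.2 :=
    fun p => mul_nonneg (mul_nonneg (sq_nonneg _) (Real.exp_nonneg _)) (hnn _ _)
  -- conversion helper
  have key : ∀ g : V d × V d → ℝ, Measurable g → (∀ p, 0 ≤ g p) →
      ∫ p, g p ∂((volume : Measure (V d)).prod volume)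
        = (∫⁻ p, ENNReal.ofReal (g p) ∂((volume : Measure (V d)).prod volume)).toReal :=
    fun g hg h0 => integral_eq_lintegral_of_nonneg_ae
      (Filter.Eventually.of_forall h0) hg.aestronglyMeasurable
  -- En = (1/2) * A
  have hEnA : En d α m u = (1/2 : ℝ≥0∞) * A := by
    unfold En
    rw [hAdef]
    congr 1
    exact lintegral_lintegral
      (f := fun x y => ENNReal.ofReal ((u x - u y) ^ 2 * nker d α m x y))
      hm1.ennreal_ofReal.aemeasurable
  have hAne : A ≠ ⊤ := by
    intro h
    exact hE (by rw [hEnA, h, ENNReal.mul_top (by norm_num : (1/2 : ℝ≥0∞) ≠ 0)])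
  -- B ≤ A, B ≤ C ≤ e^{M₀} B
  have hBleA : B ≤ A := by
    rw [hAdef, hBdef]
    apply lintegral_mono; intro p
    apply ENNReal.ofReal_le_ofReal
    have h1 := hexpFm_le_one p.1 p.2
    have h2 := hnn p.1 p.2
    have h3 := sq_nonneg (u p.1 - u p.2)
    exact mul_le_mul_of_nonneg_right (mul_le_of_le_one_right h3 h1) h2
  have hBne : B ≠ ⊤ := (lt_of_le_of_lt hBleA hAne.lt_top).ne
  have hBleC : B ≤ C := by
    rw [hBdef, hCdef]
    apply lintegral_mono; intro p
    apply ENNReal.ofReal_le_ofReal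
    have h1 : Real.exp (-(Fm d F p.1 p.2)) ≤ Real.exp (F p.1 p.2) := by
      apply Real.exp_le_exp.mpr
      rw [hFsplit p.1 p.2]
      linarith [hFp0 p.1 p.2]
    have h2 := hnn p.1 p.2
    have h3 := sq_nonneg (u p.1 - u p.2)
    exact mul_le_mul_of_nonneg_right (mul_le_mul_of_nonneg_left h1 h3) h2
  have hCleB : C ≤ ENNReal.ofReal (Real.exp M₀) * B := by
    rw [hCdef, hBdef, ← lintegral_const_mul' _ _ ENNReal.ofReal_ne_top]
    apply lintegral_mono; intro p
    dsimp only
    rw [← ENNReal.ofReal_mul (Real.exp_nonneg M₀)]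
    apply ENNReal.ofReal_le_ofReal
    have hsp : Real.exp (F p.1 p.2)
        = Real.exp (Fp d F p.1 p.2) * Real.exp (-(Fm d F p.1 p.2)) := by
      rw [← Real.exp_add, ← sub_eq_add_neg, ← hFsplit]
    have h2 : Real.exp (Fp d F p.1 p.2) ≤ Real.exp M₀ := Real.exp_le_exp.mpr (hFpB p.1 p.2)
    have h3 := Real.exp_nonneg (-(Fm d F p.1 p.2))
    have h4 := hnn p.1 p.2
    have h5 := sq_nonneg (u p.1 - u p.2)
    rw [hsp]
    nlinarith [mul_le_mul_of_nonneg_right h2 (mul_nonneg (mul_nonneg h5 h3) h4)]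
  have hCne : C ≠ ⊤ :=
    (lt_of_le_of_lt hCleB (ENNReal.mul_lt_top ENNReal.ofReal_lt_top hBne.lt_top)).ne
  have hPpne : Pp ≠ ⊤ := hNGp
  have hPmne : Pm ≠ ⊤ := hNGm
  -- split identities
  have hSp : ∫⁻ p : V d × V d, ENNReal.ofReal
      (((u p.1) ^ 2 + (u p.2) ^ 2) * Gp d F p.1 p.2 * nker d α m p.1 p.2)
      ∂((volume : Measure (V d)).prod volume) = Pp + Pp := by
    rw [hPpdef]
    exact lintegral_split d α m hα0 hα2 (Gp d F) hGpm hGp0 hGpsym u hu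
  have hSm : ∫⁻ p : V d × V d, ENNReal.ofReal
      (((u p.1) ^ 2 + (u p.2) ^ 2) * Gm d F p.1 p.2 * nker d α m p.1 p.2)
      ∂((volume : Measure (V d)).prod volume) = Pm + Pm := by
    rw [hPmdef]
    exact lintegral_split d α m hα0 hα2 (Gm d F) hGmm hGm0 hGmsym u hu
  -- real/ℝ≥0∞ identifications
  have hI1A : I1 = A.toReal := by rw [hI1def, hAdef]; exact key _ hm1 h1nn
  have hIbB : Ib = B.toReal := by rw [hIbdef, hBdef]; exact key _ hmb hbnn
  have hI4C : I4 = C.toReal := by rw [hI4def, hCdef]; exact key _ hm4 h4nn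
  have hI3P : I3 = Pp.toReal + Pp.toReal := by
    rw [hI3def, key _ hm3 h3nn, hSp, ENNReal.toReal_add hPpne hPpne]
  have hI5P : I5 = Pm.toReal + Pm.toReal := by
    rw [hI5def, key _ hm5 h5nn, hSm, ENNReal.toReal_add hPmne hPmne]
  -- integrabilities
  have h1int : Integrable
      (fun p : V d × V d => (u p.1 - u p.2) ^ 2 * nker d α m p.1 p.2)
      ((volume : Measure (V d)).prod volume) := by
    apply integrable_of_lint hm1 h1nn
    rw [← hAdef]; exact hAne
  have hbint : Integrable
      (fun p : V d × V d =>
        (u p.1 - u p.2) ^ 2 * Real.exp (-(Fm d F p.1 p.2)) * nker d α m p.1 p.2)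
      ((volume : Measure (V d)).prod volume) := by
    apply integrable_of_lint hmb hbnn
    rw [← hBdef]; exact hBne
  have h3int : Integrable
      (fun p : V d × V d =>
        ((u p.1) ^ 2 + (u p.2) ^ 2) * Gp d F p.1 p.2 * nker d α m p.1 p.2)
      ((volume : Measure (V d)).prod volume) := by
    apply integrable_of_lint hm3 h3nn
    rw [hSp]
    exact ENNReal.add_ne_top.mpr ⟨hPpne, hPpne⟩
  have h5int : Integrable
      (fun p : V d × V d =>
        ((u p.1) ^ 2 + (u p.2) ^ 2) * Gm d F p.1 p.2 * nker d α m p.1 p.2)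
      ((volume : Measure (V d)).prod volume) := by
    apply integrable_of_lint hm5 h5nn
    rw [hSm]
    exact ENNReal.add_ne_top.mpr ⟨hPmne, hPmne⟩
  have h2int : Integrable
      (fun p : V d × V d =>
        u p.1 * u p.2 * (Real.exp (F p.1 p.2) - 1) * nker d α m p.1 p.2)
      ((volume : Measure (V d)).prod volume) := by
    apply Integrable.mono (h3int.add h5int) hm2.aestronglyMeasurable
    apply Filter.Eventually.of_forall
    intro p
    have hgg : Real.exp (F p.1 p.2) - 1 = Gp d F p.1 p.2 - Gm d F p.1 p.2 := by
      rw [hexpF p.1 p.2]; ring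
    have h2 := hnn p.1 p.2
    have hab : |u p.1 * u p.2| ≤ (u p.1) ^ 2 + (u p.2) ^ 2 := by
      rw [abs_le]
      constructor
      · nlinarith [sq_nonneg (u p.1 + u p.2)]
      · nlinarith [sq_nonneg (u p.1 - u p.2)]
    have hd : |Gp d F p.1 p.2 - Gm d F p.1 p.2| ≤ Gp d F p.1 p.2 + Gm d F p.1 p.2 := by
      rw [abs_le]
      constructor
      · linarith [hGp0 p.1 p.2, hGm0 p.1 p.2]
      · linarith [hGp0 p.1 p.2, hGm0 p.1 p.2]
    have hrhs : ((u p.1) ^ 2 + (u p.2) ^ 2) * Gp d F p.1 p.2 * nker d α m p.1 p.2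
        + ((u p.1) ^ 2 + (u p.2) ^ 2) * Gm d F p.1 p.2 * nker d α m p.1 p.2
        = ((u p.1) ^ 2 + (u p.2) ^ 2) * (Gp d F p.1 p.2 + Gm d F p.1 p.2)
          * nker d α m p.1 p.2 := by ring
    simp only [Pi.add_apply]
    rw [Real.norm_eq_abs, Real.norm_eq_abs, hrhs, hgg]
    have hQ : 0 ≤ ((u p.1) ^ 2 + (u p.2) ^ 2) * (Gp d F p.1 p.2 + Gm d F p.1 p.2)
        * nker d α m p.1 p.2 :=
      mul_nonneg (mul_nonneg (by positivity) (by linarith [hGp0 p.1 p.2, hGm0 p.1 p.2])) h2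
    rw [abs_of_nonneg hQ, abs_mul, abs_of_nonneg h2, abs_mul]
    refine mul_le_mul_of_nonneg_right ?_ h2
    exact mul_le_mul hab hd (abs_nonneg _)
      (by positivity : (0:ℝ) ≤ (u p.1) ^ 2 + (u p.2) ^ 2)
  -- pointwise identity
  have hpt : ∀ p : V d × V d,
      (u p.1 - u p.2) ^ 2 * nker d α m p.1 p.2
        - 2 * (u p.1 * u p.2 * (Real.exp (F p.1 p.2) - 1) * nker d α m p.1 p.2)
        + ((u p.1) ^ 2 + (u p.2) ^ 2) * Gp d F p.1 p.2 * nker d α m p.1 p.2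
      = (u p.1 - u p.2) ^ 2 * Real.exp (F p.1 p.2) * nker d α m p.1 p.2
        + ((u p.1) ^ 2 + (u p.2) ^ 2) * Gm d F p.1 p.2 * nker d α m p.1 p.2 := by
    intro p
    rw [hexpF p.1 p.2]
    ring
  have h4int : Integrable
      (fun p : V d × V d =>
        (u p.1 - u p.2) ^ 2 * Real.exp (F p.1 p.2) * nker d α m p.1 p.2)
      ((volume : Measure (V d)).prod volume) := by
    apply integrable_of_lint hm4 h4nn
    rw [← hCdef]; exact hCne
  -- integral identity
  have hID : I1 - 2 * I2 + I3 = I4 + I5 := by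
    have hcongr : ∫ p : V d × V d,
        ((u p.1 - u p.2) ^ 2 * nker d α m p.1 p.2
          - 2 * (u p.1 * u p.2 * (Real.exp (F p.1 p.2) - 1) * nker d α m p.1 p.2)
          + ((u p.1) ^ 2 + (u p.2) ^ 2) * Gp d F p.1 p.2 * nker d α m p.1 p.2)
        ∂((volume : Measure (V d)).prod volume)
      = ∫ p : V d × V d,
        ((u p.1 - u p.2) ^ 2 * Real.exp (F p.1 p.2) * nker d α m p.1 p.2
          + ((u p.1) ^ 2 + (u p.2) ^ 2) * Gm d F p.1 p.2 * nker d α m p.1 p.2)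
        ∂((volume : Measure (V d)).prod volume) :=
      integral_congr_ae (Filter.Eventually.of_forall hpt)
    have e1 : ∫ p : V d × V d,
        ((u p.1 - u p.2) ^ 2 * nker d α m p.1 p.2
          - 2 * (u p.1 * u p.2 * (Real.exp (F p.1 p.2) - 1) * nker d α m p.1 p.2)
          + ((u p.1) ^ 2 + (u p.2) ^ 2) * Gp d F p.1 p.2 * nker d α m p.1 p.2)
        ∂((volume : Measure (V d)).prod volume)
      = (∫ p : V d × V d,
          ((u p.1 - u p.2) ^ 2 * nker d α m p.1 p.2
            - 2 * (u p.1 * u p.2 * (Real.exp (F p.1 p.2) - 1) * nker d α m p.1 p.2))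
          ∂((volume : Measure (V d)).prod volume)) + I3 := by
      rw [hI3def]
      exact integral_add (h1int.sub (h2int.const_mul 2)) h3int
    have e2 : ∫ p : V d × V d,
        ((u p.1 - u p.2) ^ 2 * nker d α m p.1 p.2
          - 2 * (u p.1 * u p.2 * (Real.exp (F p.1 p.2) - 1) * nker d α m p.1 p.2))
        ∂((volume : Measure (V d)).prod volume)
      = I1 - ∫ p : V d × V d,
          2 * (u p.1 * u p.2 * (Real.exp (F p.1 p.2) - 1) * nker d α m p.1 p.2)
          ∂((volume : Measure (V d)).prod volume) := by
      rw [hI1def]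
      exact integral_sub h1int (h2int.const_mul 2)
    have e3 : ∫ p : V d × V d,
        2 * (u p.1 * u p.2 * (Real.exp (F p.1 p.2) - 1) * nker d α m p.1 p.2)
        ∂((volume : Measure (V d)).prod volume) = 2 * I2 := by
      rw [hI2def]
      exact integral_const_mul 2 _
    have e4 : ∫ p : V d × V d,
        ((u p.1 - u p.2) ^ 2 * Real.exp (F p.1 p.2) * nker d α m p.1 p.2
          + ((u p.1) ^ 2 + (u p.2) ^ 2) * Gm d F p.1 p.2 * nker d α m p.1 p.2)
        ∂((volume : Measure (V d)).prod volume) = I4 + I5 := by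
      rw [hI4def, hI5def]
      exact integral_add h4int h5int
    linarith only [hcongr, e1, e2, e3, e4]
  -- rho computations
  have hrhop : (sqInt d u (rho d α m (Gp d F) μp)).toReal
      = (sqInt d u μp).toReal + Pp.toReal := by
    rw [sqInt_rho_eq d α m (Gp d F) hGpm μp u hu, ← hPpdef, ENNReal.toReal_add hμp hPpne]
  have hEnM : EnMinus d α m F μm u = (1/2 : ℝ≥0∞) * B + (sqInt d u μm + Pm) := by
    unfold EnMinus
    rw [sqInt_rho_eq d α m (Gm d F) hGmm μm u hu, ← hPmdef]
    congr 1
    rw [hBdef]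
    congr 1
    exact lintegral_lintegral
      (f := fun x y => ENNReal.ofReal
        ((u x - u y) ^ 2 * Real.exp (-(Fm d F x y)) * nker d α m x y))
      hmb.ennreal_ofReal.aemeasurable
  have h12 : ((1 : ℝ≥0∞) / 2).toReal = 1/2 := by rw [ENNReal.toReal_div]; norm_num
  have hEnMtoReal : (EnMinus d α m F μm u).toReal
      = Ib / 2 + ((sqInt d u μm).toReal + Pm.toReal) := by
    rw [hEnM, ENNReal.toReal_add (ENNReal.mul_ne_top (by norm_num) hBne)
      (ENNReal.add_ne_top.mpr ⟨hμm, hPmne⟩), ENNReal.toReal_mul,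
      ENNReal.toReal_add hμm hPmne, hIbB, h12]
    ring
  have hcross : crossInt d α m F u = I2 := by
    rw [hI2def]
    unfold crossInt
    rw [MeasureTheory.Measure.volume_eq_prod]
  have hEnToReal : (En d α m u).toReal = I1 / 2 := by
    rw [hEnA, ENNReal.toReal_mul, hI1A, h12]
    ring
  have hEY : EmuF d α m F μp μm u + (sqInt d u (rho d α m (Gp d F) μp)).toReal
      = I1 / 2 - I2 + Pp.toReal + (sqInt d u μm).toReal := by
    unfold EmuF
    rw [hcross, hrhop, hEnToReal]
    ring
  have hIb4 : Ib ≤ I4 := by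
    rw [hIbB, hI4C]
    exact ENNReal.toReal_mono hCne hBleC
  have hI4b : I4 ≤ Real.exp M₀ * Ib := by
    rw [hI4C, hIbB]
    calc C.toReal ≤ (ENNReal.ofReal (Real.exp M₀) * B).toReal :=
          ENNReal.toReal_mono (ENNReal.mul_ne_top ENNReal.ofReal_ne_top hBne) hCleB
      _ = Real.exp M₀ * B.toReal := by
          rw [ENNReal.toReal_mul, ENNReal.toReal_ofReal (Real.exp_nonneg _)]
  have hPptr : Pp.toReal = I3 / 2 := by rw [hI3P]; ring
  have hPmtr : Pm.toReal = I5 / 2 := by rw [hI5P]; ring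
  have hmain : I1 / 2 - I2 + Pp.toReal = I4 / 2 + Pm.toReal := by
    rw [hPptr, hPmtr]
    linarith only [hID]
  have hSm0 : 0 ≤ (sqInt d u μm).toReal := ENNReal.toReal_nonneg
  have hPm0 : 0 ≤ Pm.toReal := ENNReal.toReal_nonneg
  have hexp1 : 1 ≤ Real.exp M₀ := by
    rw [← Real.exp_zero]; exact Real.exp_le_exp.mpr hM₀.le
  constructor
  · rw [hEnMtoReal, hEY, hmain]
    linarith only [hIb4]
  · rw [hEnMtoReal, hEY, hmain]
    have hkill : (sqInt d u μm).toReal + Pm.toReal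
        ≤ Real.exp M₀ * ((sqInt d u μm).toReal + Pm.toReal) :=
      le_mul_of_one_le_left (add_nonneg hSm0 hPm0) hexp1
    have hdist : Real.exp M₀ * (Ib / 2 + ((sqInt d u μm).toReal + Pm.toReal))
        = Real.exp M₀ * Ib / 2 + Real.exp M₀ * ((sqInt d u μm).toReal + Pm.toReal) := by
      ring
    rw [hdist]
    linarith only [hI4b, hkill]
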